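/- Let A be a bounded positive operator with trivial kernel on a complex Hilbert space H, and let Z be a closed linear subspace of H with Z ∩ range(A) = {0}. Then there exists a linear isometry V : H → H such that AV is positive and the orthogonal complement of the range of V equals Z. -/

import Mathlib

open ContinuousLinearMap

local notation "⟪" x ", " y "⟫" => @inner ℂ _ _ x y

/-- Let `A` be bounded positive injective and `Z` a closed subspace with `Z ∩ range A = {0}`.
Then there is a linear isometry `V` with `AV` positive and `(range V)ᗮ = Z`. -/
theorem stmt4 {H : Type*} [NormedAddCommGroup H] [InnerProductSpace ℂ H] [CompleteSpace H]
    (A : H →L[ℂ] H) (hA : A.IsPositive) (hAinj : Function.Injective A)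
    (Z : Submodule ℂ H) (hZclosed : IsClosed (Z : Set H))
    (hZA : Z ⊓ LinearMap.range (A : H →ₗ[ℂ] H) = ⊥) :
    ∃ V : H →L[ℂ] H, (∀ x, ‖V x‖ = ‖x‖) ∧ (A ∘L V).IsPositive ∧
      (LinearMap.range (V : H →ₗ[ℂ] H))ᗮ = Z := by
  haveI : CompleteSpace Z := hZclosed.completeSpace_coe
  set K : Submodule ℂ H := Zᗮ with hKdef
  haveI : CompleteSpace K := Z.isClosed_orthogonal.completeSpace_coe
  set P : H →L[ℂ] H := K.subtypeL ∘L Submodule.orthogonalProjectionOnto K with hPdef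
  have hPsa : IsSelfAdjoint P := isSelfAdjoint_starProjection K
  have hKperp : Kᗮ = Z := Z.orthogonal_orthogonal
  -- symmetry helpers
  have symA : ∀ x y : H, ⟪A x, y⟫ = ⟪x, A y⟫ :=
    fun x y => (isSelfAdjoint_iff_isSymmetric.mp hA.isSelfAdjoint) x y
  have symP : ∀ x y : H, ⟪P x, y⟫ = ⟪x, P y⟫ :=
    fun x y => (isSelfAdjoint_iff_isSymmetric.mp hPsa) x y
  -- idempotency of P
  have hPP : ∀ x, P (P x) = P x := by
    intro x
    show (K.subtypeL ∘L Submodule.orthogonalProjectionOnto K) _ = _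
    simp [hPdef, Submodule.orthogonalProjectionOnto_mem_subspace_eq_self, Submodule.starProjection_eq_self_iff]
  have hPmem : ∀ x, P x ∈ K := fun x => (Submodule.orthogonalProjectionOnto K x).2
  have hPker : ∀ y, P y = 0 ↔ y ∈ Z := by
    intro y
    rw [← hKperp]
    constructor
    · intro h
      have : (Submodule.orthogonalProjectionOnto K y : H) = 0 := h
      exact Submodule.orthogonalProjectionOnto_eq_zero_iff.mp (by exact_mod_cast this)
    · intro h
      have : Submodule.orthogonalProjectionOnto K y = 0 := Submodule.orthogonalProjectionOnto_eq_zero_iff.mpr h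
      show K.subtypeL (Submodule.orthogonalProjectionOnto K y) = 0
      rw [this]; simp
  -- P is positive
  have hPpos : P.IsPositive := by
    refine ⟨isSelfAdjoint_iff_isSymmetric.mp hPsa, fun x => ?_⟩
    have : ⟪P x, x⟫ = ⟪P x, P x⟫ := by
      conv_lhs => rw [← hPP x]
      rw [symP (P x) x]
    rw [ContinuousLinearMap.reApplyInnerSelf_apply, this]
    exact inner_self_nonneg
  set B : H →L[ℂ] H := A ∘L P ∘L A with hBdef
  have hBpos : B.IsPositive := by
    have := hPpos.adjoint_conj A
    rwa [hA.isSelfAdjoint.adjoint_eq] at this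
  set D : H →L[ℂ] H := CFC.sqrt B with hDdef
  have hBnonneg : (0 : H →L[ℂ] H) ≤ B := (nonneg_iff_isPositive B).mpr hBpos
  have hDD : ∀ x, D (D x) = B x := by
    intro x
    have h : D * D = B := CFC.sqrt_mul_sqrt_self B hBnonneg
    calc D (D x) = (D * D) x := rfl
    _ = B x := by rw [h]
  have hDpos : D.IsPositive := (nonneg_iff_isPositive D).mp (CFC.sqrt_nonneg B)
  have symD : ∀ x y : H, ⟪D x, y⟫ = ⟪x, D y⟫ :=
    fun x y => (isSelfAdjoint_iff_isSymmetric.mp hDpos.isSelfAdjoint) x y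
  -- key norm identity
  have hinner : ∀ x, ⟪D x, D x⟫ = ⟪P (A x), P (A x)⟫ := by
    intro x
    calc ⟪D x, D x⟫ = ⟪x, D (D x)⟫ := symD x (D x)
    _ = ⟪x, A (P (A x))⟫ := by rw [hDD x]; rfl
    _ = ⟪A x, P (A x)⟫ := (symA x (P (A x))).symm
    _ = ⟪P (A x), P (A x)⟫ := by
        rw [← symP (P (A x)) (A x), hPP (A x), symP]
  have hnorm : ∀ x, ‖D x‖ = ‖P (A x)‖ := by
    intro x
    have h := hinner x
    rw [inner_self_eq_norm_sq_to_K, inner_self_eq_norm_sq_to_K] at h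
    have h2 : ‖D x‖ ^ 2 = ‖P (A x)‖ ^ 2 := by exact_mod_cast h
    nlinarith [norm_nonneg (D x), norm_nonneg (P (A x)), sq_abs (‖D x‖)]
  -- injectivity of D
  have hDzero : ∀ x, D x = 0 → x = 0 := by
    intro x hx
    have hB0 : B x = 0 := by rw [← hDD x, hx, map_zero]
    have hPA0 : P (A x) = 0 := hAinj (by simpa [hBdef] using hB0)
    have hAZ : A x ∈ Z := (hPker (A x)).mp hPA0
    have : A x ∈ Z ⊓ LinearMap.range (A : H →ₗ[ℂ] H) := ⟨hAZ, ⟨x, rfl⟩⟩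
    rw [hZA] at this
    exact hAinj (by simpa using this)
  have hDinj : Function.Injective (D : H →ₗ[ℂ] H) := by
    intro a b hab
    have : D (a - b) = 0 := by
      simp only [map_sub]
      simpa [sub_eq_zero] using hab
    exact sub_eq_zero.mp (hDzero _ this)
  -- range of D, as a submodule, is dense
  set S : Submodule ℂ H := LinearMap.range ((D : H →ₗ[ℂ] H)) with hSdef
  have hSperp : Sᗮ = ⊥ := by
    rw [Submodule.eq_bot_iff]
    intro y hy
    have h0 : ∀ x : H, ⟪D x, y⟫ = 0 := by
      intro x
      exact (Submodule.mem_orthogonal S y).mp hy (D x) ⟨x, rfl⟩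
    have hDy : D y = 0 := by
      have := h0 (D y)
      rw [symD] at this
      exact inner_self_eq_zero.mp this
    exact hDzero y hDy
  have hSdense : Dense (S : Set H) := by
    rw [Submodule.dense_iff_topologicalClosure_eq_top,
      ← Submodule.orthogonal_orthogonal_eq_closure, hSperp,
      Submodule.bot_orthogonal_eq_top]
  -- the partial isometry on range D
  let e : ↥S →L[ℂ] H := S.subtypeL
  have h_dense : DenseRange e := hSdense.denseRange_val
  have h_e : IsUniformInducing e := isometry_subtype_coe.isUniformInducing
  let eqv : H ≃ₗ[ℂ] ↥S := LinearEquiv.ofInjective (D : H →ₗ[ℂ] H) hDinj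
  have heqv : ∀ x : H, ((eqv x : H)) = D x := fun x => rfl
  let fLin : ↥S →ₗ[ℂ] H :=
    (((P ∘L A : H →L[ℂ] H) : H →ₗ[ℂ] H)).comp (eqv.symm : ↥S ≃ₗ[ℂ] H).toLinearMap
  have hf_apply : ∀ x : H, fLin (eqv x) = P (A x) := by
    intro x
    show (P ∘L A) (eqv.symm (eqv x)) = P (A x)
    rw [eqv.symm_apply_apply]
    rfl
  have hfnorm : ∀ u : ↥S, ‖fLin u‖ = ‖u‖ := by
    intro u
    obtain ⟨x, hx⟩ : ∃ x, eqv x = u := ⟨eqv.symm u, eqv.apply_symm_apply u⟩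
    rw [← hx, hf_apply]
    have h2 : ‖(eqv x : ↥S)‖ = ‖D x‖ := by rw [← heqv x]; rfl
    rw [h2]
    exact (hnorm x).symm
  let fI : ↥S →ₗᵢ[ℂ] H := ⟨fLin, hfnorm⟩
  let U : H →L[ℂ] H := ContinuousLinearMap.extend fI.toContinuousLinearMap e
  have hUD : ∀ x : H, U (D x) = P (A x) := by
    intro x
    have h1 : e (eqv x) = D x := heqv x
    calc U (D x) = U (e (eqv x)) := by rw [h1]
    _ = fI.toContinuousLinearMap (eqv x) := ContinuousLinearMap.extend_eq _ h_dense h_e _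
    _ = P (A x) := hf_apply x
  -- U is an isometry
  have hUnorm : ∀ y, ‖U y‖ = ‖y‖ := by
    have h := Continuous.ext_on hSdense (U.continuous.norm) continuous_norm ?_
    · exact fun y => congrFun h y
    · rintro u ⟨x, rfl⟩
      show ‖U (D x)‖ = ‖D x‖
      rw [hUD, hnorm]
  -- A ∘ U = D
  have hAU : A ∘L U = D := by
    have h : (fun y : H => A (U y)) = fun y : H => D y := by
      refine Continuous.ext_on hSdense (by fun_prop) D.continuous ?_
      rintro u ⟨x, rfl⟩
      show A (U (D x)) = D (D x)
      rw [hUD, hDD]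
      rfl
    ext y
    exact congrFun h y
  -- range U = K
  have hUK : ∀ y, U y ∈ K := by
    have hclosed : IsClosed (U ⁻¹' (K : Set H)) :=
      (Z.isClosed_orthogonal).preimage U.continuous
    have hsub : (S : Set H) ⊆ U ⁻¹' (K : Set H) := by
      rintro u ⟨x, rfl⟩
      show U (D x) ∈ K
      rw [hUD]
      exact hPmem _
    intro y
    have : y ∈ closure (S : Set H) := by rw [hSdense.closure_eq]; trivial
    exact closure_minimal hsub hclosed this
  set M : Submodule ℂ H := LinearMap.range ((P ∘L A : H →L[ℂ] H) : H →ₗ[ℂ] H) with hMdef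
  have hMperp : Mᗮ = Z := by
    ext y
    rw [Submodule.mem_orthogonal]
    constructor
    · intro h
      have h1 : ∀ x : H, ⟪P (A x), y⟫ = 0 := fun x => h _ ⟨x, rfl⟩
      have h3 : ∀ x : H, ⟪x, A (P y)⟫ = 0 := by
        intro x
        calc ⟪x, A (P y)⟫ = ⟪A x, P y⟫ := (symA x (P y)).symm
        _ = ⟪P (A x), y⟫ := (symP (A x) y).symm
        _ = 0 := h1 x
      have h2 : A (P y) = 0 := by
        have := h3 (A (P y))
        exact inner_self_eq_zero.mp this
      have hPy : P y = 0 := hAinj (by simpa using h2)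
      exact (hPker y).mp hPy
    · intro hy u hu
      obtain ⟨x, rfl⟩ := hu
      have hPy : P y = 0 := (hPker y).mpr hy
      calc ⟪(P ∘L A) x, y⟫ = ⟪A x, P y⟫ := symP _ _
      _ = 0 := by rw [hPy, inner_zero_right]
  have hMK : M.topologicalClosure = K := by
    rw [← Submodule.orthogonal_orthogonal_eq_closure, hMperp]
  have hUclosed : IsClosed ((LinearMap.range (U : H →ₗ[ℂ] H) : Submodule ℂ H) : Set H) := by
    let Ui : H →ₗᵢ[ℂ] H := ⟨(U : H →ₗ[ℂ] H), hUnorm⟩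
    have h1 : IsClosed (Set.range Ui) := Ui.isometry.isClosedEmbedding.isClosed_range
    have h2 : ((LinearMap.range (U : H →ₗ[ℂ] H) : Submodule ℂ H) : Set H) = Set.range Ui := by
      ext y
      simp [LinearMap.mem_range, Set.mem_range, Ui]
    rw [h2]
    exact h1
  have hKle : K ≤ LinearMap.range (U : H →ₗ[ℂ] H) := by
    rw [← hMK]
    apply Submodule.topologicalClosure_minimal
    · rintro _ ⟨x, rfl⟩
      exact ⟨D x, hUD x⟩
    · exact hUclosed
  have hUrange : LinearMap.range (U : H →ₗ[ℂ] H) = K :=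
    le_antisymm (by rintro _ ⟨y, rfl⟩; exact hUK y) hKle
  exact ⟨U, hUnorm, hAU ▸ hDpos, by rw [hUrange, hKperp]⟩
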